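/- If the open segment between two vertices u and v of a polytope P intersects the open segment between two other vertices z and w of P (with {z, w} ≠ {u, v}), then u and v are not adjacent in the 1-skeleton of P. -/

import Mathlib

/-- If an extreme point lies in a segment between two points of the set,
it equals an endpoint. -/
lemma extreme_mem_segment {d : ℕ} {P : Set (Fin d → ℝ)} {z a b : Fin d → ℝ}
    (hz : z ∈ P.extremePoints ℝ) (ha : a ∈ P) (hb : b ∈ P)
    (hmem : z ∈ segment ℝ a b) : z = a ∨ z = b := by
  obtain ⟨s, t, hs, ht, hst, heq⟩ := hmem
  rcases eq_or_lt_of_le hs with hs0 | hs0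
  · right
    have : t = 1 := by linarith
    simp [← hs0, this] at heq
    exact heq.symm
  rcases eq_or_lt_of_le ht with ht0 | ht0
  · left
    have : s = 1 := by linarith
    simp [← ht0, this] at heq
    exact heq.symm
  have hopen : z ∈ openSegment ℝ a b := ⟨s, t, hs0, ht0, hst, heq⟩
  exact Or.inl (hz.2 ha hb hopen).symm

/-- if the open segment between vertices `u, v` of a polytope `P`
meets the open segment between two other vertices `z, w`, then `[u,v]` is not a
face of `P`, i.e. `u` and `v` are not adjacent in the 1-skeleton. -/
theorem stmt2 {d : ℕ} (S : Set (Fin d → ℝ)) (hS : S.Finite)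
    (P : Set (Fin d → ℝ)) (hP : P = convexHull ℝ S)
    (u v z w : Fin d → ℝ)
    (hu : u ∈ P.extremePoints ℝ) (hv : v ∈ P.extremePoints ℝ)
    (hz : z ∈ P.extremePoints ℝ) (hw : w ∈ P.extremePoints ℝ)
    (hne : ¬ ((z = u ∧ w = v) ∨ (z = v ∧ w = u)))
    (hmeet : (openSegment ℝ u v ∩ openSegment ℝ z w).Nonempty) :
    ¬ ∃ f : (Fin d → ℝ) →ₗ[ℝ] ℝ,
      {p ∈ P | ∀ q ∈ P, f q ≤ f p} = segment ℝ u v := by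
  rintro ⟨f, hf⟩
  obtain ⟨x, hxuv, hxzw⟩ := hmeet
  have huP : u ∈ P := hu.1
  have hvP : v ∈ P := hv.1
  have hxface : x ∈ {p ∈ P | ∀ q ∈ P, f q ≤ f p} := by
    rw [hf]; exact openSegment_subset_segment ℝ u v hxuv
  have hxmax : ∀ q ∈ P, f q ≤ f x := hxface.2
  obtain ⟨a, b, ha, hb, hab, hxeq⟩ := hxzw
  have hfz : f z ≤ f x := hxmax z hz.1
  have hfw : f w ≤ f x := hxmax w hw.1
  have hfx : f x = a * f z + b * f w := by
    rw [← hxeq]; simp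
  have hfz' : f z = f x := by
    by_contra h
    have h' : f z < f x := lt_of_le_of_ne hfz h
    have e : a * f x + b * f x = f x := by rw [← add_mul, hab, one_mul]
    nlinarith [mul_lt_mul_of_pos_left h' ha, mul_le_mul_of_nonneg_left hfw hb.le]
  have hfw' : f w = f x := by
    by_contra h
    have h' : f w < f x := lt_of_le_of_ne hfw h
    have e : a * f x + b * f x = f x := by rw [← add_mul, hab, one_mul]
    nlinarith [mul_lt_mul_of_pos_left h' hb, mul_le_mul_of_nonneg_left hfz ha.le]
  have hzseg : z ∈ segment ℝ u v := by
    rw [← hf]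
    exact ⟨hz.1, fun q hq => hfz' ▸ hxmax q hq⟩
  have hwseg : w ∈ segment ℝ u v := by
    rw [← hf]
    exact ⟨hw.1, fun q hq => hfw' ▸ hxmax q hq⟩
  have hz' := extreme_mem_segment hz huP hvP hzseg
  have hw' := extreme_mem_segment hw huP hvP hwseg
  -- degenerate case helper: if z = w then x = z and x ∈ openSegment u v forces u = v
  have hdeg : z = w → u = v := by
    intro hzw
    have hxz : x = z := by rw [← hxeq, ← hzw, ← add_smul, hab, one_smul]
    have h2 := hz.2 huP hvP (hxz ▸ hxuv)
    have h3 := hz.2 hvP huP (by rw [openSegment_symm]; exact hxz ▸ hxuv)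
    exact h2.trans h3.symm
  rcases hz' with hz1 | hz1 <;> rcases hw' with hw1 | hw1
  · -- z = u, w = u
    have huv : u = v := hdeg (hz1.trans hw1.symm)
    exact hne (Or.inl ⟨hz1, hw1.trans huv⟩)
  · exact hne (Or.inl ⟨hz1, hw1⟩)
  · exact hne (Or.inr ⟨hz1, hw1⟩)
  · have huv : u = v := hdeg (hz1.trans hw1.symm)
    exact hne (Or.inl ⟨hz1.trans huv.symm, hw1⟩)
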